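/- Let V be an n×n Hermitian matrix with ordered eigenvalues μ₁(V) ≥ ... ≥ μₙ(V) and let S be an arbitrary n×n matrix. Then for every i, the i-th ordered eigenvalue of S†VS satisfies μᵢ(S†VS) ≤ ρ(S†S)·μᵢ(V) when μᵢ(V) ≥ 0, where ρ denotes the spectral radius. -/

import Mathlib

open Matrix

/-- The eigenvalues of a Hermitian matrix, listed in decreasing order:
`orderedEigenvalues hV 0 ≥ orderedEigenvalues hV 1 ≥ ...`. -/
noncomputable def orderedEigenvalues {n : ℕ} {V : Matrix (Fin n) (Fin n) ℂ}
    (hV : V.IsHermitian) : Fin n → ℝ :=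
  fun i => (hV.eigenvalues ∘ Tuple.sort hV.eigenvalues) i.rev


namespace LMWAux

open Matrix Finset Submodule
open scoped InnerProductSpace ComplexOrder NNReal ENNReal

variable {n : ℕ}

local notation "E" => EuclideanSpace ℂ (Fin n)

/-- repr coefficients vanish outside the spanning index set. -/
lemma repr_eq_zero_of_mem_span (b : OrthonormalBasis (Fin n) ℂ E) (T : Finset (Fin n))
    {x : E} (hx : x ∈ span ℂ (⇑b '' ↑T)) {j : Fin n} (hj : j ∉ T) :
    b.repr x j = 0 := by
  rw [OrthonormalBasis.repr_apply_apply]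
  induction hx using Submodule.span_induction with
  | mem y hy =>
    obtain ⟨k, hk, rfl⟩ := hy
    exact b.orthonormal.2 (fun h : j = k => hj (h ▸ hk))
  | zero => simp
  | add y z _ _ hy hz => rw [inner_add_right, hy, hz, add_zero]
  | smul a y _ hy => rw [inner_smul_right, hy, mul_zero]

lemma toEuclideanLin_eigenvectorBasis {A : Matrix (Fin n) (Fin n) ℂ} (hA : A.IsHermitian)
    (j : Fin n) :
    Matrix.toEuclideanLin A (hA.eigenvectorBasis j) = (hA.eigenvalues j : ℂ) • hA.eigenvectorBasis j := by
  apply PiLp.ext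
  intro k
  have := congrFun (hA.mulVec_eigenvectorBasis j) k
  simpa [Matrix.toEuclideanLin_apply, Complex.real_smul] using this

lemma repr_toEuclideanLin {A : Matrix (Fin n) (Fin n) ℂ} (hA : A.IsHermitian) (x : E) (j : Fin n) :
    hA.eigenvectorBasis.repr (Matrix.toEuclideanLin A x) j
      = (hA.eigenvalues j : ℂ) * hA.eigenvectorBasis.repr x j := by
  rw [OrthonormalBasis.repr_apply_apply, OrthonormalBasis.repr_apply_apply]
  have hadj : LinearMap.adjoint (Matrix.toEuclideanLin A) = Matrix.toEuclideanLin A := by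
    rw [← Matrix.toEuclideanLin_conjTranspose_eq_adjoint, hA.eq]
  calc ⟪hA.eigenvectorBasis j, Matrix.toEuclideanLin A x⟫_ℂ
      = ⟪LinearMap.adjoint (Matrix.toEuclideanLin A) (hA.eigenvectorBasis j), x⟫_ℂ := by
        rw [LinearMap.adjoint_inner_left]
    _ = ⟪(hA.eigenvalues j : ℂ) • hA.eigenvectorBasis j, x⟫_ℂ := by
        rw [hadj, toEuclideanLin_eigenvectorBasis]
    _ = (hA.eigenvalues j : ℂ) * ⟪hA.eigenvectorBasis j, x⟫_ℂ := by
        rw [inner_smul_left, Complex.conj_ofReal]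

lemma re_inner_toEuclideanLin {A : Matrix (Fin n) (Fin n) ℂ} (hA : A.IsHermitian) (x : E) :
    Complex.re ⟪x, Matrix.toEuclideanLin A x⟫_ℂ
      = ∑ j, hA.eigenvalues j * ‖hA.eigenvectorBasis.repr x j‖ ^ 2 := by
  have h1 : ⟪x, Matrix.toEuclideanLin A x⟫_ℂ
      = ⟪hA.eigenvectorBasis.repr x, hA.eigenvectorBasis.repr (Matrix.toEuclideanLin A x)⟫_ℂ :=
    (hA.eigenvectorBasis.repr.inner_map_map x _).symm
  rw [h1, PiLp.inner_apply]
  rw [Complex.re_sum]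
  apply Finset.sum_congr rfl
  intro j _
  rw [repr_toEuclideanLin]
  simp only [RCLike.inner_apply]
  set c := hA.eigenvectorBasis.repr x j
  have : (hA.eigenvalues j : ℂ) * c * (starRingEnd ℂ) c
      = (hA.eigenvalues j : ℂ) * ((starRingEnd ℂ) c * c) := by ring
  rw [this, RCLike.conj_mul]
  simp [Complex.mul_re, ← Complex.ofReal_pow]

lemma norm_sq_eq_sum (b : OrthonormalBasis (Fin n) ℂ E) (x : E) :
    ‖x‖ ^ 2 = ∑ j, ‖b.repr x j‖ ^ 2 := by
  rw [← b.repr.norm_map x, EuclideanSpace.norm_eq, Real.sq_sqrt]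
  positivity



lemma quad_ge {A : Matrix (Fin n) (Fin n) ℂ} (hA : A.IsHermitian) (T : Finset (Fin n)) (c : ℝ)
    (hc : ∀ j ∈ T, c ≤ hA.eigenvalues j)
    {x : E} (hx : x ∈ span ℂ (⇑hA.eigenvectorBasis '' ↑T)) :
    c * ‖x‖ ^ 2 ≤ Complex.re ⟪x, Matrix.toEuclideanLin A x⟫_ℂ := by
  rw [re_inner_toEuclideanLin, norm_sq_eq_sum hA.eigenvectorBasis, Finset.mul_sum]
  apply Finset.sum_le_sum
  intro j _
  by_cases hj : j ∈ T
  · exact mul_le_mul_of_nonneg_right (hc j hj) (by positivity)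
  · rw [repr_eq_zero_of_mem_span _ T hx hj]; simp

lemma quad_le {A : Matrix (Fin n) (Fin n) ℂ} (hA : A.IsHermitian) (T : Finset (Fin n)) (c : ℝ)
    (hc : ∀ j ∈ T, hA.eigenvalues j ≤ c)
    {x : E} (hx : x ∈ span ℂ (⇑hA.eigenvectorBasis '' ↑T)) :
    Complex.re ⟪x, Matrix.toEuclideanLin A x⟫_ℂ ≤ c * ‖x‖ ^ 2 := by
  rw [re_inner_toEuclideanLin, norm_sq_eq_sum hA.eigenvectorBasis, Finset.mul_sum]
  apply Finset.sum_le_sum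
  intro j _
  by_cases hj : j ∈ T
  · exact mul_le_mul_of_nonneg_right (hc j hj) (by positivity)
  · rw [repr_eq_zero_of_mem_span _ T hx hj]; simp

lemma finrank_span_basis_image (b : OrthonormalBasis (Fin n) ℂ E) (T : Finset (Fin n)) :
    Module.finrank ℂ (span ℂ (⇑b '' ↑T)) = T.card := by
  classical
  rw [← Finset.coe_image]
  have hinj : Function.Injective ⇑b := by
    have := b.toBasis.injective
    rwa [OrthonormalBasis.coe_toBasis] at this
  have hli : LinearIndependent ℂ ((↑) : (↑(T.image ⇑b) : Set E) → E) := by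
    apply b.toBasis.linearIndependent.linearIndepOn_id.mono
    rw [OrthonormalBasis.coe_toBasis]
    intro y hy
    simp only [Finset.coe_image, Set.mem_image, Finset.mem_coe] at hy
    obtain ⟨k, _, rfl⟩ := hy
    exact Set.mem_range_self k
  rw [finrank_span_finset_eq_card hli, Finset.card_image_of_injective _ hinj]

lemma finrank_comap_ge (f : E →ₗ[ℂ] E) (U : Submodule ℂ E) :
    Module.finrank ℂ U ≤ Module.finrank ℂ (U.comap f) := by
  have h1 := LinearMap.finrank_range_add_finrank_ker (U.mkQ.comp f)
  have hker : LinearMap.ker (U.mkQ.comp f) = U.comap f := by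
    rw [LinearMap.ker_comp, Submodule.ker_mkQ]
  have h2 : Module.finrank ℂ (LinearMap.range (U.mkQ.comp f)) ≤ Module.finrank ℂ (E ⧸ U) :=
    Submodule.finrank_le _
  have h3 := Submodule.finrank_quotient_add_finrank U
  have h4 : Module.finrank ℂ U ≤ Module.finrank ℂ E := Submodule.finrank_le _
  rw [hker] at h1
  omega

lemma exists_ne_zero_mem_inf (W K : Submodule ℂ E)
    (h : Module.finrank ℂ E < Module.finrank ℂ W + Module.finrank ℂ K) :
    ∃ x : E, x ≠ 0 ∧ x ∈ W ∧ x ∈ K := by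
  have h1 := Submodule.finrank_sup_add_finrank_inf_eq W K
  have h2 : Module.finrank ℂ ↥(W ⊔ K) ≤ Module.finrank ℂ E := Submodule.finrank_le _
  have h3 : 0 < Module.finrank ℂ ↥(W ⊓ K) := by omega
  rw [Module.finrank_pos_iff] at h3
  obtain ⟨⟨x, hx⟩, hne⟩ := exists_ne (0 : ↥(W ⊓ K))
  have hx0 : x ≠ 0 := fun h0 => hne (by simp [Subtype.ext_iff, h0])
  exact ⟨x, hx0, hx.1, hx.2⟩

lemma toEuclideanLin_mul (M N : Matrix (Fin n) (Fin n) ℂ) (x : E) :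
    Matrix.toEuclideanLin (M * N) x = Matrix.toEuclideanLin M (Matrix.toEuclideanLin N x) := by
  simp [Matrix.toEuclideanLin_apply, Matrix.mulVec_mulVec]

lemma eigenvalue_le_spectralRadius_toReal {A : Matrix (Fin n) (Fin n) ℂ} (hA : A.IsHermitian)
    (j : Fin n) : hA.eigenvalues j ≤ (spectralRadius ℂ A).toReal := by
  have hmem : (hA.eigenvalues j : ℂ) ∈ spectrum ℂ A :=
    spectrum.algebraMap_mem ℂ (hA.eigenvalues_mem_spectrum_real j)
  have hle : (‖(hA.eigenvalues j : ℂ)‖₊ : ℝ≥0∞) ≤ spectralRadius ℂ A := by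
    unfold spectralRadius
    exact le_iSup₂ (f := fun k (_ : k ∈ spectrum ℂ A) => (‖k‖₊ : ℝ≥0∞)) _ hmem
  have hfin : spectralRadius ℂ A ≠ ⊤ := by
    set F : NNReal := (A.finite_spectrum (R := ℂ)).toFinset.sup (fun k => ‖k‖₊) with hF
    have hBd : spectralRadius ℂ A ≤ (F : ℝ≥0∞) := by
      unfold spectralRadius
      apply iSup₂_le
      intro k hk
      exact ENNReal.coe_le_coe.2
        (Finset.le_sup ((A.finite_spectrum (R := ℂ)).mem_toFinset.2 hk))
    exact ne_top_of_le_ne_top ENNReal.coe_ne_top hBd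
  calc hA.eigenvalues j ≤ ‖(hA.eigenvalues j : ℂ)‖ := by
        rw [Complex.norm_real, Real.norm_eq_abs]; exact le_abs_self _
    _ = ((‖(hA.eigenvalues j : ℂ)‖₊ : ℝ≥0∞)).toReal := by simp
    _ ≤ (spectralRadius ℂ A).toReal := ENNReal.toReal_mono hfin hle

end LMWAux


open scoped InnerProductSpace in
/-- **Multiplicative Lidskii–Mirsky–Wielandt bound.** For a Hermitian `V` and arbitrary `S`,
the `i`-th ordered eigenvalue satisfies `μᵢ(S†VS) ≤ ρ(S†S)·μᵢ(V)` whenever `μᵢ(V) ≥ 0`,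
where `ρ` is the spectral radius. -/
theorem ordered_eigenvalue_congruence_bound {n : ℕ} (V S : Matrix (Fin n) (Fin n) ℂ)
    (hV : V.IsHermitian) (hSVS : (Sᴴ * V * S).IsHermitian) (i : Fin n)
    (hpos : 0 ≤ orderedEigenvalues hV i) :
    orderedEigenvalues hSVS i ≤ (spectralRadius ℂ (Sᴴ * S)).toReal * orderedEigenvalues hV i := by
  classical
  have hSS : (Sᴴ * S).IsHermitian := isHermitian_conjTranspose_mul_self S
  set ρ : ℝ := (spectralRadius ℂ (Sᴴ * S)).toReal with hρ
  set bB := hSVS.eigenvectorBasis with hbB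
  set bV := hV.eigenvectorBasis with hbV
  set σB := Tuple.sort hSVS.eigenvalues with hσB
  set σV := Tuple.sort hV.eigenvalues with hσV
  set TB : Finset (Fin n) := (Finset.Ici i.rev).image σB with hTB
  set TV : Finset (Fin n) := (Finset.Iic i.rev).image σV with hTV
  set W : Submodule ℂ (EuclideanSpace ℂ (Fin n)) := Submodule.span ℂ (⇑bB '' ↑TB) with hW
  set U : Submodule ℂ (EuclideanSpace ℂ (Fin n)) := Submodule.span ℂ (⇑bV '' ↑TV) with hU
  set TS := Matrix.toEuclideanLin S with hTS
  have hn : Module.finrank ℂ (EuclideanSpace ℂ (Fin n)) = n := finrank_euclideanSpace_fin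
  have hWrank : Module.finrank ℂ W = i + 1 := by
    rw [hW, LMWAux.finrank_span_basis_image, hTB,
      Finset.card_image_of_injective _ σB.injective, Fin.card_Ici, Fin.val_rev]
    omega
  have hUcard : TV.card = n - (i : ℕ) := by
    rw [hTV, Finset.card_image_of_injective _ σV.injective, Fin.card_Iic, Fin.val_rev]
    omega
  have hUrank : Module.finrank ℂ U = n - (i : ℕ) := by
    rw [hU, LMWAux.finrank_span_basis_image, hUcard]
  have hKrank : n - (i : ℕ) ≤ Module.finrank ℂ (U.comap TS) := by
    rw [← hUrank]; exact LMWAux.finrank_comap_ge TS U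
  obtain ⟨x, hx0, hxW, hxK⟩ : ∃ x : EuclideanSpace ℂ (Fin n), x ≠ 0 ∧ x ∈ W ∧ x ∈ U.comap TS := by
    apply LMWAux.exists_ne_zero_mem_inf
    rw [hn, hWrank]
    have := i.isLt
    omega
  -- lower bound for the quadratic form of SᴴVS on W
  have h1 : orderedEigenvalues hSVS i * ‖x‖ ^ 2
      ≤ Complex.re ⟪x, Matrix.toEuclideanLin (Sᴴ * V * S) x⟫_ℂ := by
    apply LMWAux.quad_ge hSVS TB _ _ hxW
    intro j hj
    rw [hTB, Finset.mem_image] at hj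
    obtain ⟨k, hk, rfl⟩ := hj
    rw [Finset.mem_Ici] at hk
    exact Tuple.monotone_sort hSVS.eigenvalues hk
  -- rewrite the quadratic form through S
  have h2 : Complex.re ⟪x, Matrix.toEuclideanLin (Sᴴ * V * S) x⟫_ℂ
      = Complex.re ⟪TS x, Matrix.toEuclideanLin V (TS x)⟫_ℂ := by
    rw [LMWAux.toEuclideanLin_mul (Sᴴ * V) S, LMWAux.toEuclideanLin_mul Sᴴ V,
      Matrix.toEuclideanLin_conjTranspose_eq_adjoint, LinearMap.adjoint_inner_right]
  -- upper bound for the quadratic form of V on U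
  have h3 : Complex.re ⟪TS x, Matrix.toEuclideanLin V (TS x)⟫_ℂ
      ≤ orderedEigenvalues hV i * ‖TS x‖ ^ 2 := by
    apply LMWAux.quad_le hV TV _ _ (Submodule.mem_comap.mp hxK)
    intro j hj
    rw [hTV, Finset.mem_image] at hj
    obtain ⟨k, hk, rfl⟩ := hj
    rw [Finset.mem_Iic] at hk
    exact Tuple.monotone_sort hV.eigenvalues hk
  -- bound on ‖Sx‖²
  have h4 : ‖TS x‖ ^ 2 ≤ ρ * ‖x‖ ^ 2 := by
    have hsum : Complex.re ⟪x, Matrix.toEuclideanLin (Sᴴ * S) x⟫_ℂ ≤ ρ * ‖x‖ ^ 2 := by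
      apply LMWAux.quad_le hSS Finset.univ _ _ (by
        rw [Finset.coe_univ, Set.image_univ]
        have := hSS.eigenvectorBasis.toBasis.span_eq
        rw [OrthonormalBasis.coe_toBasis] at this
        rw [this]
        trivial)
      intro j _
      exact LMWAux.eigenvalue_le_spectralRadius_toReal hSS j
    have : (‖TS x‖ : ℝ) ^ 2 = Complex.re ⟪x, Matrix.toEuclideanLin (Sᴴ * S) x⟫_ℂ := by
      rw [LMWAux.toEuclideanLin_mul Sᴴ S, Matrix.toEuclideanLin_conjTranspose_eq_adjoint,
        LinearMap.adjoint_inner_right]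
      rw [← @inner_self_eq_norm_sq ℂ]
      rfl
    rw [this]
    exact hsum
  have hxpos : (0 : ℝ) < ‖x‖ ^ 2 := pow_pos (norm_pos_iff.mpr hx0) 2
  have hchain : orderedEigenvalues hSVS i * ‖x‖ ^ 2 ≤ (ρ * orderedEigenvalues hV i) * ‖x‖ ^ 2 := by
    calc orderedEigenvalues hSVS i * ‖x‖ ^ 2
        ≤ Complex.re ⟪x, Matrix.toEuclideanLin (Sᴴ * V * S) x⟫_ℂ := h1
      _ = Complex.re ⟪TS x, Matrix.toEuclideanLin V (TS x)⟫_ℂ := h2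
      _ ≤ orderedEigenvalues hV i * ‖TS x‖ ^ 2 := h3
      _ ≤ orderedEigenvalues hV i * (ρ * ‖x‖ ^ 2) := mul_le_mul_of_nonneg_left h4 hpos
      _ = (ρ * orderedEigenvalues hV i) * ‖x‖ ^ 2 := by ring
  exact le_of_mul_le_mul_right hchain hxpos
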